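/- Under the assumptions that p_1,…,p_m are independent p-values with P(p_j ≤ t) ≤ t for all j ∈ H_0 and t ∈ [0,1], that the filter F is monotonic, and that the weight functions satisfy Condition 1 (coordinate-wise nondecreasing with Σ_{i∈H_0} E[1/ŵ_i(p_{0,i})] ≤ m), the Weighted Focused BH procedure controls the FDR at level q: E[|U* ∩ H_0| / max(|U*|, 1)] ≤ q. -/

import Mathlib

open MeasureTheory ProbabilityTheory Finset
open scoped Classical ENNReal

/-- 1-D splitting: a positive-measure set avoiding atoms has mass on both sides of
some rational. -/
lemma wfbh_oneD_split (ν : Measure ℝ) [IsFiniteMeasure ν] (G : Set ℝ)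
    (hpos : ν G ≠ 0) (hna : ∀ x ∈ G, ν {x} = 0) :
    ∃ c : ℚ, ν (G ∩ Set.Iio (c : ℝ)) ≠ 0 ∧ ν (G ∩ Set.Ioi (c : ℝ)) ≠ 0 := by
  set T : Set ℝ := {t : ℝ | ν (G ∩ Set.Iic t) ≠ 0} with hTdef
  set R : Set ℝ := {t : ℝ | ν (G ∩ Set.Ioi t) ≠ 0} with hRdef
  have hT : T.Nonempty := by
    by_contra hc
    rw [Set.not_nonempty_iff_eq_empty] at hc
    have h0 : ∀ n : ℕ, ν (G ∩ Set.Iic (n : ℝ)) = 0 := by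
      intro n
      by_contra h
      have : (n:ℝ) ∈ T := h
      rw [hc] at this
      exact this
    have hsub : G ⊆ ⋃ n : ℕ, G ∩ Set.Iic (n : ℝ) := by
      intro x hx
      obtain ⟨n, hn⟩ := exists_nat_ge x
      exact Set.mem_iUnion.2 ⟨n, hx, hn⟩
    exact hpos (le_antisymm (le_trans (measure_mono hsub) (le_of_eq (measure_iUnion_null h0)))
      (zero_le))
  have hR : R.Nonempty := by
    by_contra hc
    rw [Set.not_nonempty_iff_eq_empty] at hc
    have h0 : ∀ n : ℕ, ν (G ∩ Set.Ioi (-(n : ℝ) - 1)) = 0 := by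
      intro n
      by_contra h
      have : (-(n:ℝ) - 1) ∈ R := h
      rw [hc] at this
      exact this
    have hsub : G ⊆ ⋃ n : ℕ, G ∩ Set.Ioi (-(n : ℝ) - 1) := by
      intro x hx
      obtain ⟨n, hn⟩ := exists_nat_ge (-x)
      refine Set.mem_iUnion.2 ⟨n, hx, ?_⟩
      simp only [Set.mem_Ioi]
      linarith
    exact hpos (le_antisymm (le_trans (measure_mono hsub) (le_of_eq (measure_iUnion_null h0)))
      (zero_le))
  by_contra hcon
  push_neg at hcon
  -- main claim : no t₀ ∈ T is below some t₁ ∈ R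
  have h2 : ∀ t₀ ∈ T, ∀ t₁ ∈ R, t₁ ≤ t₀ := by
    intro t₀ ht₀ t₁ ht₁
    by_contra hlt
    push_neg at hlt
    obtain ⟨c, hc1, hc2⟩ := exists_rat_btwn hlt
    refine absurd (hcon c ?_) ?_
    · intro h
      exact ht₀ (le_antisymm (le_trans (measure_mono (Set.inter_subset_inter_right _
        (fun x hx => lt_of_le_of_lt hx hc1))) h.le) (zero_le))
    · intro h
      exact ht₁ (le_antisymm (le_trans (measure_mono (Set.inter_subset_inter_right _
        (fun x hx => lt_trans hc2 hx))) h.le) (zero_le))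
  obtain ⟨t₁, ht₁⟩ := hR
  have hbdd : BddBelow T := ⟨t₁, fun t ht => h2 t ht t₁ ht₁⟩
  set c := sInf T with hcdef
  have hν1 : ν (G ∩ Set.Iio c) = 0 := by
    have hsub : G ∩ Set.Iio c ⊆ ⋃ n : ℕ, G ∩ Set.Iic (c - 1 / (n + 1)) := by
      rintro x ⟨hxG, hx⟩
      obtain ⟨n, hn⟩ := exists_nat_one_div_lt (show (0:ℝ) < _ from sub_pos.2 hx)
      refine Set.mem_iUnion.2 ⟨n, hxG, ?_⟩
      have : (1 : ℝ) / (n + 1) < c - x := hn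
      simp only [Set.mem_Iic]
      linarith
    have h0 : ∀ n : ℕ, ν (G ∩ Set.Iic (c - 1 / (n + 1))) = 0 := by
      intro n
      by_contra h
      have : c ≤ c - 1 / (n + 1) := csInf_le hbdd h
      have hpos' : (0:ℝ) < 1 / (n + 1) := by positivity
      linarith
    exact le_antisymm (le_trans (measure_mono hsub) (le_of_eq (measure_iUnion_null h0)))
      (zero_le)
  have hν2 : ν (G ∩ {c}) = 0 := by
    by_cases hcG : c ∈ G
    · exact le_antisymm (le_trans (measure_mono Set.inter_subset_right) (le_of_eq (hna c hcG)))
        (zero_le)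
    · have : G ∩ {c} = ∅ := by
        ext x; simp only [Set.mem_inter_iff, Set.mem_singleton_iff, Set.mem_empty_iff_false,
          iff_false, not_and]
        rintro hx rfl; exact hcG hx
      simp [this]
  have hν3 : ν (G ∩ Set.Ioi c) = 0 := by
    have hsub : G ∩ Set.Ioi c ⊆ ⋃ n : ℕ, G ∩ Set.Ioi (c + 1 / (n + 1)) := by
      rintro x ⟨hxG, hx⟩
      obtain ⟨n, hn⟩ := exists_nat_one_div_lt (show (0:ℝ) < _ from sub_pos.2 hx)
      refine Set.mem_iUnion.2 ⟨n, hxG, ?_⟩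
      have : (1 : ℝ) / (n + 1) < x - c := hn
      simp only [Set.mem_Ioi]
      linarith
    have h0 : ∀ n : ℕ, ν (G ∩ Set.Ioi (c + 1 / (n + 1))) = 0 := by
      intro n
      by_contra h
      -- c + 1/(n+1) ∈ R, so it is a lower bound of T, so ≤ c
      have hlb : ∀ t ∈ T, c + 1 / (n + 1) ≤ t := fun t ht => h2 t ht _ h
      have : c + 1 / (n + 1) ≤ c := le_csInf hT hlb
      have hpos' : (0:ℝ) < 1 / (n + 1) := by positivity
      linarith
    exact le_antisymm (le_trans (measure_mono hsub) (le_of_eq (measure_iUnion_null h0)))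
      (zero_le)
  have hsplit : G ⊆ (G ∩ Set.Iio c) ∪ (G ∩ {c}) ∪ (G ∩ Set.Ioi c) := by
    intro x hx
    rcases lt_trichotomy x c with h | h | h
    · exact Or.inl (Or.inl ⟨hx, h⟩)
    · exact Or.inl (Or.inr ⟨hx, h⟩)
    · exact Or.inr ⟨hx, h⟩
  refine hpos (le_antisymm (le_trans (measure_mono hsplit) ?_) (zero_le))
  calc ν ((G ∩ Set.Iio c) ∪ (G ∩ {c}) ∪ (G ∩ Set.Ioi c))
      ≤ ν ((G ∩ Set.Iio c) ∪ (G ∩ {c})) + ν (G ∩ Set.Ioi c) := measure_union_le _ _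
    _ ≤ ν (G ∩ Set.Iio c) + ν (G ∩ {c}) + ν (G ∩ Set.Ioi c) := by
        gcongr; exact measure_union_le _ _
    _ = 0 := by rw [hν1, hν2, hν3]; simp

/-- If a measurable set avoiding all coordinate atoms has positive product measure, then
some rational open lower box and the closed upper box at the same rational corner both
catch positive measure of it. -/
lemma wfbh_exists_rat_box : ∀ (n : ℕ) (ν : Fin n → Measure ℝ)
    (_ : ∀ i, IsProbabilityMeasure (ν i)) (A : Set (Fin n → ℝ)) (_ : MeasurableSet A)
    (_ : Measure.pi ν A ≠ 0) (_ : ∀ v ∈ A, ∀ i, ν i {v i} = 0),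
    ∃ d : Fin n → ℚ, Measure.pi ν (A ∩ {v | ∀ i, v i < (d i : ℝ)}) ≠ 0 ∧
      Measure.pi ν (A ∩ {v | ∀ i, (d i : ℝ) ≤ v i}) ≠ 0 := by
  intro n
  induction n with
  | zero =>
    intro ν hν A hA hpos hna
    refine ⟨Fin.elim0, ?_, ?_⟩ <;>
    · convert hpos using 2
      ext v
      simp [IsEmpty.forall_iff]
  | succ n IH =>
    intro ν hν A hA hpos hna
    haveI := hν
    set e := MeasurableEquiv.piFinSuccAbove (fun _ : Fin (n + 1) => ℝ) 0 with hedef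
    have mp := measurePreserving_piFinSuccAbove ν 0
    set ν' : Fin n → Measure ℝ := fun j => ν (Fin.succAbove 0 j) with hν'def
    haveI : ∀ j, IsProbabilityMeasure (ν' j) := fun j => hν _
    set At : Set (ℝ × (Fin n → ℝ)) := e.symm ⁻¹' A with hAtdef
    have hesymm : ∀ (x : ℝ) (y : Fin n → ℝ), e.symm (x, y) = Fin.insertNth 0 x y := by
      intro x y; rfl
    have hAtm : MeasurableSet At := e.symm.measurable hA
    have hmpsymm := mp.symm e
    have hprodAt : (ν 0).prod (Measure.pi ν') At = Measure.pi ν A :=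
      hmpsymm.measure_preimage hA.nullMeasurableSet
    -- sections
    set S : ℝ → Set (Fin n → ℝ) := fun x => Prod.mk x ⁻¹' At with hSdef
    have hSm : ∀ x, MeasurableSet (S x) := fun x => hAtm.preimage measurable_prodMk_left
    have hSmem : ∀ x y, y ∈ S x ↔ Fin.insertNth 0 x y ∈ A := by
      intro x y
      simp only [hSdef, Set.mem_preimage, hAtdef, hesymm]
    have hgm : Measurable fun x => Measure.pi ν' (S x) :=
      measurable_measure_prodMk_left hAtm
    set X : Set ℝ := {x | Measure.pi ν' (S x) ≠ 0} with hXdef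
    have hXm : MeasurableSet X := by
      have : X = (fun x => Measure.pi ν' (S x)) ⁻¹' ({0}ᶜ) := rfl
      rw [this]
      exact hgm (measurableSet_singleton 0).compl
    have hX : ν 0 X ≠ 0 := by
      intro h0
      apply hpos
      rw [← hprodAt, Measure.prod_apply hAtm]
      rw [lintegral_eq_zero_iff hgm]
      rw [Filter.eventuallyEq_iff_exists_mem]
      refine ⟨{x | Measure.pi ν' (S x) = 0}, ?_, fun x hx => hx⟩
      rw [mem_ae_iff]
      have hco : {x | Measure.pi ν' (S x) = 0}ᶜ = X := by
        ext x; simp [hXdef]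
      rw [hco]
      exact h0
    -- the sets X_d
    set L : (Fin n → ℚ) → Set (Fin n → ℝ) := fun d => {y | ∀ k, y k < (d k : ℝ)} with hLdef
    set K : (Fin n → ℚ) → Set (Fin n → ℝ) := fun d => {y | ∀ k, (d k : ℝ) ≤ y k} with hKdef
    have hLm : ∀ d, MeasurableSet (L d) := by
      intro d
      have : L d = ⋂ k, {y : Fin n → ℝ | y k < (d k : ℝ)} := by
        ext y; simp [hLdef]
      rw [this]
      exact MeasurableSet.iInter fun k => measurableSet_lt (measurable_pi_apply k) measurable_const
    have hKm : ∀ d, MeasurableSet (K d) := by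
      intro d
      have : K d = ⋂ k, {y : Fin n → ℝ | (d k : ℝ) ≤ y k} := by
        ext y; simp [hKdef]
      rw [this]
      exact MeasurableSet.iInter fun k => measurableSet_le measurable_const (measurable_pi_apply k)
    set Xd : (Fin n → ℚ) → Set ℝ := fun d =>
      {x | Measure.pi ν' (S x ∩ L d) ≠ 0 ∧ Measure.pi ν' (S x ∩ K d) ≠ 0} with hXddef
    have hsecL : ∀ d x, S x ∩ L d = Prod.mk x ⁻¹' (At ∩ Set.univ ×ˢ L d) := by
      intro d x; ext y
      simp [hSdef, Set.mem_prod]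
    have hsecK : ∀ d x, S x ∩ K d = Prod.mk x ⁻¹' (At ∩ Set.univ ×ˢ K d) := by
      intro d x; ext y
      simp [hSdef, Set.mem_prod]
    have hXdm : ∀ d, MeasurableSet (Xd d) := by
      intro d
      have h1 : Measurable fun x => Measure.pi ν' (S x ∩ L d) := by
        simp_rw [hsecL d]
        exact measurable_measure_prodMk_left (hAtm.inter (MeasurableSet.univ.prod (hLm d)))
      have h2 : Measurable fun x => Measure.pi ν' (S x ∩ K d) := by
        simp_rw [hsecK d]
        exact measurable_measure_prodMk_left (hAtm.inter (MeasurableSet.univ.prod (hKm d)))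
      exact (h1 (measurableSet_singleton 0).compl).inter (h2 (measurableSet_singleton 0).compl)
    have hcover : X ⊆ ⋃ d : Fin n → ℚ, Xd d := by
      intro x hx
      obtain ⟨d, hd1, hd2⟩ := IH ν' inferInstance (S x) (hSm x) hx
        (by
          intro y hy k
          have hmem := (hSmem x y).1 hy
          have := hna _ hmem (Fin.succAbove 0 k)
          rwa [Fin.insertNth_apply_succAbove] at this)
      exact Set.mem_iUnion.2 ⟨d, hd1, hd2⟩
    have hXdpos : ∃ d, ν 0 (Xd d) ≠ 0 := by
      by_contra hall
      push_neg at hall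
      exact hX (le_antisymm (le_trans (measure_mono hcover)
        (le_of_eq (measure_iUnion_null hall))) (zero_le))
    obtain ⟨d, hd⟩ := hXdpos
    have hXdna : ∀ x ∈ Xd d, ν 0 {x} = 0 := by
      intro x hx
      obtain ⟨y, hy⟩ := nonempty_of_measure_ne_zero hx.1
      have hmem := (hSmem x y).1 hy.1
      have := hna _ hmem 0
      rwa [Fin.insertNth_apply_same] at this
    obtain ⟨c, hc1, hc2⟩ := wfbh_oneD_split (ν 0) (Xd d) hd hXdna
    refine ⟨Fin.cons c d, ?_, ?_⟩
    · -- lower box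
      have hbox : e.symm ⁻¹' (A ∩ {v | ∀ i, v i < ((Fin.cons c d : Fin (n+1) → ℚ) i : ℝ)}) =
          At ∩ (Set.Iio (c : ℝ)) ×ˢ L d := by
        ext ⟨x, y⟩
        simp only [Set.mem_preimage, Set.mem_inter_iff, hesymm, Set.mem_setOf_eq, hAtdef,
          Set.mem_prod, Set.mem_Iio, hLdef]
        refine and_congr Iff.rfl ?_
        rw [Fin.forall_iff_succAbove 0]
        simp [Fin.insertNth_apply_same, Fin.insertNth_apply_succAbove]
      have hms : MeasurableSet (A ∩ {v | ∀ i, v i < ((Fin.cons c d : Fin (n+1) → ℚ) i : ℝ)}) := by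
        refine hA.inter ?_
        have : {v : Fin (n+1) → ℝ | ∀ i, v i < ((Fin.cons c d : Fin (n+1) → ℚ) i : ℝ)} =
            ⋂ i, {v : Fin (n+1) → ℝ | v i < ((Fin.cons c d : Fin (n+1) → ℚ) i : ℝ)} := by
          ext v; simp
        rw [this]
        exact MeasurableSet.iInter fun i =>
          measurableSet_lt (measurable_pi_apply i) measurable_const
      rw [← hmpsymm.measure_preimage hms.nullMeasurableSet, hbox]
      intro hzero
      have hm2 : MeasurableSet (At ∩ (Set.Iio (c:ℝ)) ×ˢ L d) :=
        hAtm.inter (measurableSet_Iio.prod (hLm d))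
      rw [Measure.prod_apply hm2, lintegral_eq_zero_iff
        (measurable_measure_prodMk_left hm2)] at hzero
      have hzero' := ae_iff.mp hzero
      apply hc1
      refine le_antisymm (le_trans (measure_mono ?_) (le_of_eq hzero')) (zero_le)
      rintro x ⟨hx1, hx2⟩
      simp only [Set.mem_setOf_eq, Pi.zero_apply]
      have : Prod.mk x ⁻¹' (At ∩ (Set.Iio (c:ℝ)) ×ˢ L d) = S x ∩ L d := by
        ext y
        simp only [Set.mem_preimage, Set.mem_inter_iff, Set.mem_prod, Set.mem_Iio, hSdef]
        constructor
        · rintro ⟨h1, _, h3⟩; exact ⟨h1, h3⟩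
        · rintro ⟨h1, h3⟩; exact ⟨h1, hx2, h3⟩
      rw [this]
      exact hx1.1
    · -- upper box
      have hbox : e.symm ⁻¹' (A ∩ {v | ∀ i, ((Fin.cons c d : Fin (n+1) → ℚ) i : ℝ) ≤ v i}) =
          At ∩ (Set.Ici (c : ℝ)) ×ˢ K d := by
        ext ⟨x, y⟩
        simp only [Set.mem_preimage, Set.mem_inter_iff, hesymm, Set.mem_setOf_eq, hAtdef,
          Set.mem_prod, Set.mem_Ici, hKdef]
        refine and_congr Iff.rfl ?_
        rw [Fin.forall_iff_succAbove 0]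
        simp [Fin.insertNth_apply_same, Fin.insertNth_apply_succAbove]
      have hms : MeasurableSet (A ∩ {v | ∀ i, ((Fin.cons c d : Fin (n+1) → ℚ) i : ℝ) ≤ v i}) := by
        refine hA.inter ?_
        have : {v : Fin (n+1) → ℝ | ∀ i, ((Fin.cons c d : Fin (n+1) → ℚ) i : ℝ) ≤ v i} =
            ⋂ i, {v : Fin (n+1) → ℝ | ((Fin.cons c d : Fin (n+1) → ℚ) i : ℝ) ≤ v i} := by
          ext v; simp
        rw [this]
        exact MeasurableSet.iInter fun i =>
          measurableSet_le measurable_const (measurable_pi_apply i)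
      rw [← hmpsymm.measure_preimage hms.nullMeasurableSet, hbox]
      intro hzero
      have hm2 : MeasurableSet (At ∩ (Set.Ici (c:ℝ)) ×ˢ K d) :=
        hAtm.inter (measurableSet_Ici.prod (hKm d))
      rw [Measure.prod_apply hm2, lintegral_eq_zero_iff
        (measurable_measure_prodMk_left hm2)] at hzero
      have hzero' := ae_iff.mp hzero
      apply hc2
      refine le_antisymm (le_trans (measure_mono ?_) (le_of_eq hzero')) (zero_le)
      rintro x ⟨hx1, hx2⟩
      simp only [Set.mem_setOf_eq, Pi.zero_apply]
      have : Prod.mk x ⁻¹' (At ∩ (Set.Ici (c:ℝ)) ×ˢ K d) = S x ∩ K d := by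
        ext y
        simp only [Set.mem_preimage, Set.mem_inter_iff, Set.mem_prod, Set.mem_Ici, hSdef]
        constructor
        · rintro ⟨h1, _, h3⟩; exact ⟨h1, h3⟩
        · rintro ⟨h1, h3⟩; exact ⟨h1, le_of_lt hx2, h3⟩
      rw [this]
      exact hx1.2

/-- A measurable set containing no pair `x ⊴ y` (coordinatewise `≤`, with each non-exempt
coordinate either strictly increasing or equal at a point of `D i`) is null for the
product measure, provided `D i` contains all atoms of `ν i`. -/
lemma wfbh_antichain_null : ∀ (n : ℕ) (ν : Fin n → Measure ℝ)
    (_ : ∀ i, IsProbabilityMeasure (ν i)) (D : Fin n → Set ℝ) (_ : ∀ i, (D i).Countable)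
    (_ : ∀ i a, ν i {a} ≠ 0 → a ∈ D i) (E : Set (Fin n))
    (B : Set (Fin n → ℝ)) (_ : MeasurableSet B)
    (_ : ∀ x ∈ B, ∀ y ∈ B,
      (∀ i, i ∉ E → x i < y i ∨ (x i = y i ∧ x i ∈ D i)) → False),
    Measure.pi ν B = 0 := by
  intro n
  induction n with
  | zero =>
    intro ν hν D hD hatom E B hB hanti
    have hBe : B = ∅ := Set.eq_empty_iff_forall_notMem.2 fun x hx =>
      hanti x hx x hx (fun i => i.elim0)
    simp [hBe]
  | succ n IH =>
    intro ν hν D hD hatom E B hB hanti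
    haveI := hν
    have hHm : ∀ (i : Fin (n+1)) (a : ℝ), MeasurableSet {v : Fin (n+1) → ℝ | v i = a} := by
      intro i a
      have : {v : Fin (n+1) → ℝ | v i = a} = (fun v : Fin (n+1) → ℝ => v i) ⁻¹' {a} := by
        ext v; simp
      rw [this]
      exact (measurable_pi_apply i) (measurableSet_singleton a)
    -- each D-slice is null
    have hslice : ∀ (i : Fin (n+1)) (a : ℝ), a ∈ D i →
        Measure.pi ν (B ∩ {v | v i = a}) = 0 := by
      intro i a ha
      set e := MeasurableEquiv.piFinSuccAbove (fun _ : Fin (n + 1) => ℝ) i with hedef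
      have mp := measurePreserving_piFinSuccAbove ν i
      set ν' : Fin n → Measure ℝ := fun k => ν (Fin.succAbove i k) with hν'def
      haveI : ∀ k, IsProbabilityMeasure (ν' k) := fun k => hν _
      have hesymm : ∀ (x : ℝ) (y : Fin n → ℝ), e.symm (x, y) = Fin.insertNth i x y := by
        intro x y; rfl
      have hmpsymm := mp.symm e
      set Sec : Set (Fin n → ℝ) := {y | Fin.insertNth i a y ∈ B} with hSecdef
      have hSecm : MeasurableSet Sec := by
        have : Sec = Prod.mk a ⁻¹' (e.symm ⁻¹' B) := by
          ext y; simp [hSecdef, hesymm]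
        rw [this]
        exact (e.symm.measurable hB).preimage measurable_prodMk_left
      have hpre : e.symm ⁻¹' (B ∩ {v | v i = a}) = {a} ×ˢ Sec := by
        ext ⟨x, y⟩
        simp only [Set.mem_preimage, Set.mem_inter_iff, Set.mem_setOf_eq, hesymm,
          Set.mem_prod, Set.mem_singleton_iff, hSecdef, Fin.insertNth_apply_same]
        constructor
        · rintro ⟨h1, rfl⟩; exact ⟨rfl, h1⟩
        · rintro ⟨rfl, h1⟩; exact ⟨h1, rfl⟩
      have hSecnull : Measure.pi ν' Sec = 0 := by
        refine IH ν' inferInstance (fun k => D (Fin.succAbove i k))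
          (fun k => hD _) (fun k b hb => hatom _ b hb) {k | Fin.succAbove i k ∈ E}
          Sec hSecm ?_
        intro y hy y' hy' hcond
        refine hanti _ hy _ hy' ?_
        intro l hl
        by_cases hli : l = i
        · subst hli
          rw [Fin.insertNth_apply_same, Fin.insertNth_apply_same]
          exact Or.inr ⟨rfl, ha⟩
        · obtain ⟨k, hk⟩ := Fin.exists_succAbove_eq (Ne.symm (fun h => hli h.symm))
          subst hk
          rw [Fin.insertNth_apply_succAbove, Fin.insertNth_apply_succAbove]
          exact hcond k hl
      have := hmpsymm.measure_preimage ((hB.inter (hHm i a)).nullMeasurableSet)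
      rw [← this, hpre, Measure.prod_prod, hSecnull, mul_zero]
    -- the union of slices
    set Bad : Set (Fin (n+1) → ℝ) := ⋃ i, ⋃ a ∈ D i, (B ∩ {v | v i = a}) with hBaddef
    have hBadnull : Measure.pi ν Bad = 0 :=
      measure_iUnion_null fun i => (measure_biUnion_null_iff (hD i)).2 fun a ha => hslice i a ha
    have hBadm : MeasurableSet Bad :=
      MeasurableSet.iUnion fun i => MeasurableSet.biUnion (hD i) fun a _ => hB.inter (hHm i a)
    set B' : Set (Fin (n+1) → ℝ) := B \ Bad with hB'def
    have hB'null : Measure.pi ν B' = 0 := by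
      by_contra h
      obtain ⟨d, h1, h2⟩ := wfbh_exists_rat_box (n+1) ν hν B' (hB.diff hBadm) h
        (by
          intro v hv i
          by_contra hvi
          exact hv.2 (Set.mem_iUnion.2 ⟨i, Set.mem_biUnion (hatom i _ hvi) ⟨hv.1, rfl⟩⟩))
      obtain ⟨z, hz⟩ := nonempty_of_measure_ne_zero h1
      obtain ⟨w, hw⟩ := nonempty_of_measure_ne_zero h2
      refine hanti z hz.1.1 w hw.1.1 ?_
      intro l _
      exact Or.inl (lt_of_lt_of_le (hz.2 l) (hw.2 l))
    have hsub : B ⊆ B' ∪ Bad := fun x hx => by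
      by_cases hb : x ∈ Bad
      · exact Or.inr hb
      · exact Or.inl ⟨hx, hb⟩
    refine le_antisymm (le_trans (measure_mono hsub) ?_) (zero_le)
    calc Measure.pi ν (B' ∪ Bad) ≤ Measure.pi ν B' + Measure.pi ν Bad := measure_union_le _ _
      _ = 0 := by rw [hB'null, hBadnull, add_zero]

lemma wfbh_atoms_countable (ν : Measure ℝ) [IsFiniteMeasure ν] :
    (Set.range ((↑·) : ℚ → ℝ) ∪ {a : ℝ | ν {a} ≠ 0}).Countable := by
  refine (Set.countable_range _).union ?_
  have h1 : Set.Countable {a : ℝ | 0 < ν {a}} := by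
    refine Measure.countable_meas_pos_of_disjoint_iUnion₀
      (As := fun a : ℝ => ({a} : Set ℝ))
      (fun a => (measurableSet_singleton a).nullMeasurableSet) ?_
    intro a b hab
    simp only [Function.onFun]
    exact Disjoint.aedisjoint (by simpa using hab)
  refine h1.mono ?_
  intro a ha
  simpa [pos_iff_ne_zero] using ha

/-- Two measurable envelope functions that "stack" along the D-order are a.e. equal. -/
lemma wfbh_envelope_badset_null (n : ℕ) (ν : Fin n → Measure ℝ)
    (hν : ∀ i, IsProbabilityMeasure (ν i)) (j : Fin n)
    (lo up : (Fin n → ℝ) → ℝ≥0∞) (hlo : Measurable lo) (hup : Measurable up)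
    (hle : ∀ v, lo v ≤ up v)
    (hstack : ∀ x y : Fin n → ℝ,
      (∀ i, i ≠ j → x i < y i ∨ (x i = y i ∧
        (x i ∈ Set.range ((↑·) : ℚ → ℝ) ∨ ν i {x i} ≠ 0)))
      → up x ≤ lo y ∨ up y ≤ lo x) :
    Measure.pi ν {v | lo v ≠ up v} = 0 := by
  haveI := hν
  set D : Fin n → Set ℝ := fun i => Set.range ((↑·) : ℚ → ℝ) ∪ {a | ν i {a} ≠ 0} with hDdef
  have hD : ∀ i, (D i).Countable := by
    intro i
    refine (Set.countable_range _).union ?_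
    have h1 : Set.Countable {a : ℝ | 0 < ν i {a}} := by
      refine Measure.countable_meas_pos_of_disjoint_iUnion₀
        (As := fun a : ℝ => ({a} : Set ℝ))
        (fun a => (measurableSet_singleton a).nullMeasurableSet) ?_
      intro a b hab
      simp only [Function.onFun]
      exact Disjoint.aedisjoint (by simpa using hab)
    refine h1.mono ?_
    intro a ha
    simpa [pos_iff_ne_zero] using ha
  have hatom : ∀ i a, ν i {a} ≠ 0 → a ∈ D i := fun i a ha => Or.inr ha
  set Bq : ℚ → Set (Fin n → ℝ) := fun q =>
    {v | lo v < (Real.toNNReal q : ℝ≥0∞) ∧ (Real.toNNReal q : ℝ≥0∞) < up v} with hBqdef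
  have hBqm : ∀ q, MeasurableSet (Bq q) := by
    intro q
    exact (hlo measurableSet_Iio).inter (hup measurableSet_Ioi)
  have hcover : {v | lo v ≠ up v} ⊆ ⋃ q : ℚ, Bq q := by
    intro v hv
    have hlt : lo v < up v := lt_of_le_of_ne (hle v) hv
    obtain ⟨q, _, h1, h2⟩ := ENNReal.lt_iff_exists_rat_btwn.1 hlt
    exact Set.mem_iUnion.2 ⟨q, h1, h2⟩
  have hnull : ∀ q, Measure.pi ν (Bq q) = 0 := by
    intro q
    refine wfbh_antichain_null n ν hν D hD hatom {j} (Bq q) (hBqm q) ?_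
    intro x hx y hy hcond
    have hcond' : ∀ i, i ≠ j → x i < y i ∨ (x i = y i ∧
        (x i ∈ Set.range ((↑·) : ℚ → ℝ) ∨ ν i {x i} ≠ 0)) := by
      intro i hi
      rcases hcond i (by simpa using hi) with h | ⟨h1, h2⟩
      · exact Or.inl h
      · exact Or.inr ⟨h1, by simpa [hDdef] using h2⟩
    rcases hstack x y hcond' with h | h
    · exact absurd (lt_of_lt_of_le (lt_of_le_of_lt h hy.1) hx.2.le) (lt_irrefl _)
    · exact absurd (lt_of_lt_of_le (lt_of_le_of_lt h hx.1) hy.2.le) (lt_irrefl _)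
  exact le_antisymm (le_trans (measure_mono hcover)
    (le_of_eq (measure_iUnion_null hnull))) (zero_le)

lemma wfbh_tstar_nonneg {m : ℕ} {q : ℝ} (hq : 0 < q)
    {what : Fin m → (Fin m → ℝ) → ℝ}
    {F : Finset (Fin m) → (Fin m → ℝ) → Finset (Fin m)}
    {tstar : (Fin m → ℝ) → ℝ}
    (ht : ∀ v : Fin m → ℝ, IsGreatest {t : ℝ |
        (t = 0 ∨ ∃ i, t = what i v * v i) ∧
        (m : ℝ) * t ≤ q * ((F (univ.filter fun j => what j v * v j ≤ t) v).card : ℝ)}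
        (tstar v)) (v : Fin m → ℝ) : 0 ≤ tstar v := by
  refine (ht v).2 ⟨Or.inl rfl, ?_⟩
  rw [mul_zero]
  positivity

/-- Key deterministic comparison: lowering the p-values (keeping them nonnegative)
preserves rejection events and weakly increases the size of the filtered set. -/
lemma wfbh_key {m : ℕ} {q : ℝ} (hq : 0 < q)
    {what : Fin m → (Fin m → ℝ) → ℝ}
    (hw_pos : ∀ i v, 0 < what i v) (hw_mono : ∀ i, Monotone (what i))
    {F : Finset (Fin m) → (Fin m → ℝ) → Finset (Fin m)}
    (hF_mono : ∀ (v₁ v₂ : Fin m → ℝ) (R₁ R₂ : Finset (Fin m)),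
        v₁ ≤ v₂ → R₂ ⊆ R₁ → (F R₂ v₂).card ≤ (F R₁ v₁).card)
    {tstar : (Fin m → ℝ) → ℝ}
    (ht : ∀ v : Fin m → ℝ, IsGreatest {t : ℝ |
        (t = 0 ∨ ∃ i, t = what i v * v i) ∧
        (m : ℝ) * t ≤ q * ((F (univ.filter fun j => what j v * v j ≤ t) v).card : ℝ)}
        (tstar v))
    (v v' : Fin m → ℝ) (h0 : ∀ i, 0 ≤ v' i) (hle : v' ≤ v) :
    (∀ jj : Fin m, what jj v * v jj ≤ tstar v → what jj v' * v' jj ≤ tstar v') ∧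
    ((F (univ.filter fun i => what i v * v i ≤ tstar v) v).card ≤
      (F (univ.filter fun i => what i v' * v' i ≤ tstar v') v').card) := by
  have hprod : ∀ i, what i v' * v' i ≤ what i v * v i := fun i =>
    mul_le_mul (hw_mono i hle) (hle i) (h0 i) (hw_pos i v).le
  set C' : Finset ℝ := insert 0 (univ.image fun i => what i v' * v' i) with hC'def
  have h0mem : (0:ℝ) ∈ C'.filter (· ≤ tstar v) := by
    rw [mem_filter]
    exact ⟨mem_insert_self _ _, wfbh_tstar_nonneg hq ht v⟩
  set t' : ℝ := (C'.filter (· ≤ tstar v)).max' ⟨0, h0mem⟩ with ht'def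
  have ht'mem := (C'.filter (· ≤ tstar v)).max'_mem ⟨0, h0mem⟩
  rw [mem_filter] at ht'mem
  obtain ⟨ht'C, ht'le⟩ := ht'mem
  have hcand : t' = 0 ∨ ∃ i, t' = what i v' * v' i := by
    rcases mem_insert.1 ht'C with h | h
    · exact Or.inl h
    · obtain ⟨i, _, hi⟩ := mem_image.1 h
      exact Or.inr ⟨i, hi.symm⟩
  have hRsub : (univ.filter fun i => what i v * v i ≤ tstar v) ⊆
      (univ.filter fun i => what i v' * v' i ≤ t') := by
    intro i hi
    rw [mem_filter] at hi ⊢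
    refine ⟨mem_univ _, ?_⟩
    refine Finset.le_max' _ _ ?_
    rw [mem_filter]
    exact ⟨mem_insert_of_mem (mem_image.2 ⟨i, mem_univ _, rfl⟩),
      le_trans (hprod i) hi.2⟩
  have hcard1 : ((F (univ.filter fun i => what i v * v i ≤ tstar v) v).card : ℝ) ≤
      ((F (univ.filter fun i => what i v' * v' i ≤ t') v').card : ℝ) := by
    exact_mod_cast hF_mono v' v _ _ hle hRsub
  have hfeas : (m : ℝ) * t' ≤
      q * ((F (univ.filter fun i => what i v' * v' i ≤ t') v').card : ℝ) := by
    calc (m : ℝ) * t' ≤ (m : ℝ) * tstar v := by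
          exact mul_le_mul_of_nonneg_left ht'le (Nat.cast_nonneg m)
      _ ≤ q * ((F (univ.filter fun i => what i v * v i ≤ tstar v) v).card : ℝ) := (ht v).1.2
      _ ≤ q * ((F (univ.filter fun i => what i v' * v' i ≤ t') v').card : ℝ) :=
          mul_le_mul_of_nonneg_left hcard1 hq.le
  have ht'le' : t' ≤ tstar v' := (ht v').2 ⟨hcand, hfeas⟩
  constructor
  · intro jj hjj
    have hc : what jj v' * v' jj ∈ C'.filter (· ≤ tstar v) := by
      rw [mem_filter]
      exact ⟨mem_insert_of_mem (mem_image.2 ⟨jj, mem_univ _, rfl⟩),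
        le_trans (hprod jj) hjj⟩
    exact le_trans (Finset.le_max' _ _ hc) ht'le'
  · refine le_trans (hF_mono v' v _ _ hle hRsub) ?_
    refine hF_mono v' v' _ _ le_rfl ?_
    intro i hi
    rw [mem_filter] at hi ⊢
    exact ⟨mem_univ _, le_trans hi.2 ht'le'⟩


lemma wfbh_ennreal_cancel (a s : ℝ≥0∞) : s * (a * s)⁻¹ ≤ a⁻¹ := by
  rcases eq_or_ne s 0 with rfl | hs0
  · simp
  rcases eq_or_ne s ⊤ with rfl | hstop
  · rcases eq_or_ne a 0 with rfl | ha0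
    · simp
    · rw [ENNReal.mul_top ha0, ENNReal.inv_top, mul_zero]
      exact zero_le
  · rw [ENNReal.mul_inv (Or.inr hstop) (Or.inr hs0)]
    have h1 : s * (a⁻¹ * s⁻¹) = a⁻¹ * (s * s⁻¹) := by ring
    rw [h1, ENNReal.mul_inv_cancel hs0 hstop, mul_one]

/-- Theorem 1: Weighted Focused BH with independent superuniform null p-values,
a monotonic filter, and weight functions satisfying Condition 1, controls the FDR
at level `q`: `E[|U* ∩ H0| / max(|U*|,1)] ≤ q`, where for each realized p-value
vector `v`, `t*(v)` is the largest `t ∈ {0, ŵ_1v_1, …, ŵ_mv_m}` with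
`m·t ≤ q·|F({i : ŵ_i v_i ≤ t}, v)|`, and `U*(v) = F({i : ŵ_i(v)·v_i ≤ t*(v)}, v)`. -/
theorem wfbh_fdr_control
    {Ω : Type*} [MeasurableSpace Ω] (μ : Measure Ω) [IsProbabilityMeasure μ]
    (m : ℕ) (hm : 0 < m) (q : ℝ) (hq : 0 < q)
    (p : Fin m → Ω → ℝ) (hmeas : ∀ i, Measurable (p i))
    (hrange : ∀ i ω, p i ω ∈ Set.Icc (0:ℝ) 1)
    (hindep : iIndepFun p μ)
    (H0 : Finset (Fin m))
    (hnull : ∀ j ∈ H0, ∀ t ∈ Set.Icc (0:ℝ) 1, μ {ω | p j ω ≤ t} ≤ ENNReal.ofReal t)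
    (what : Fin m → (Fin m → ℝ) → ℝ)
    (hw_pos : ∀ i v, 0 < what i v)
    (hw_mono : ∀ i, Monotone (what i))
    (hw_cond : ∑ i ∈ H0,
        ∫ ω, (what i (Function.update (fun j => p j ω) i 0))⁻¹ ∂μ ≤ (m : ℝ))
    (F : Finset (Fin m) → (Fin m → ℝ) → Finset (Fin m))
    (hF_sub : ∀ R v, F R v ⊆ R)
    (hF_mono : ∀ (v₁ v₂ : Fin m → ℝ) (R₁ R₂ : Finset (Fin m)),
        v₁ ≤ v₂ → R₂ ⊆ R₁ → (F R₂ v₂).card ≤ (F R₁ v₁).card)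
    (tstar : (Fin m → ℝ) → ℝ)
    (ht : ∀ v : Fin m → ℝ, IsGreatest {t : ℝ |
        (t = 0 ∨ ∃ i, t = what i v * v i) ∧
        (m : ℝ) * t ≤ q * ((F (univ.filter fun j => what j v * v j ≤ t) v).card : ℝ)}
        (tstar v))
    (Ustar : (Fin m → ℝ) → Finset (Fin m))
    (hU : ∀ v : Fin m → ℝ,
        Ustar v = F (univ.filter fun j => what j v * v j ≤ tstar v) v) :
    ∫ ω, ((Ustar (fun j => p j ω) ∩ H0).card : ℝ)
        / max ((Ustar (fun j => p j ω)).card : ℝ) 1 ∂μ ≤ q := by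
  classical
  -- Step 0 : the FDP integrand
  set fdp : Ω → ℝ := fun ω => ((Ustar (fun j => p j ω) ∩ H0).card : ℝ)
      / max ((Ustar (fun j => p j ω)).card : ℝ) 1 with hfdpdef
  have hfdp_nonneg : ∀ ω, 0 ≤ fdp ω := by
    intro ω
    apply div_nonneg (Nat.cast_nonneg _)
    exact le_trans zero_le_one (le_max_right _ _)
  by_cases hInt : Integrable fdp μ
  swap
  · rw [show (∫ ω, ((Ustar (fun j => p j ω) ∩ H0).card : ℝ)
        / max ((Ustar (fun j => p j ω)).card : ℝ) 1 ∂μ) = ∫ ω, fdp ω ∂μ from rfl,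
      integral_undef hInt]
    exact hq.le
  rw [show (∫ ω, ((Ustar (fun j => p j ω) ∩ H0).card : ℝ)
        / max ((Ustar (fun j => p j ω)).card : ℝ) 1 ∂μ) = ∫ ω, fdp ω ∂μ from rfl,
    integral_eq_lintegral_of_nonneg_ae (Filter.Eventually.of_forall hfdp_nonneg) hInt.1]
  have hmain : ∫⁻ ω, ENNReal.ofReal (fdp ω) ∂μ ≤ ENNReal.ofReal q := by
    obtain ⟨n, rfl⟩ : ∃ n, m = n + 1 := ⟨m - 1, (Nat.succ_pred_eq_of_pos hm).symm⟩
    -- the random vector and its (product) law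
    set P : Ω → (Fin (n+1) → ℝ) := fun ω j => p j ω with hPdef
    have hPmeas : Measurable P := measurable_pi_lambda _ hmeas
    set ν : Fin (n+1) → Measure ℝ := fun i => Measure.map (p i) μ with hνdef
    haveI hνprob : ∀ i, IsProbabilityMeasure (ν i) := fun i =>
      Measure.isProbabilityMeasure_map (hmeas i).aemeasurable
    set νpi := Measure.pi ν with hνpidef
    have hlaw : Measure.map P μ = νpi := by
      refine (Measure.pi_eq ?_).symm
      intro s hs
      rw [Measure.map_apply hPmeas (MeasurableSet.univ_pi hs)]
      have hpre : P ⁻¹' (Set.pi Set.univ s) = ⋂ i ∈ (univ : Finset (Fin (n+1))), p i ⁻¹' s i := by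
        ext ω
        simp [Set.mem_pi, hPdef]
      rw [hpre, (iIndepFun_iff_measure_inter_preimage_eq_mul.1 hindep) univ
        (sets := fun i => s i) (fun i _ => hs i)]
      exact Finset.prod_congr rfl fun i _ => (Measure.map_apply (hmeas i) (hs i)).symm
    -- clamp
    set cl : (Fin (n+1) → ℝ) → (Fin (n+1) → ℝ) := fun v i => max (v i) 0 with hcldef
    have hclP : ∀ ω, cl (P ω) = P ω := fun ω => funext fun i => max_eq_left (hrange i ω).1
    have hcl0 : ∀ v i, 0 ≤ cl v i := fun v i => le_max_right _ _
    -- rejection-region functions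
    set As : Fin (n+1) → (Fin (n+1) → ℝ) → Set ℝ := fun j v =>
      {x | x ∈ Set.Icc (0:ℝ) 1 ∧
        what j (Function.update (cl v) j x) * x ≤ tstar (Function.update (cl v) j x)} with hAsdef
    set sfun : Fin (n+1) → (Fin (n+1) → ℝ) → ℝ := fun j v => sSup (As j v) with hsfundef
    set wfun : Fin (n+1) → (Fin (n+1) → ℝ) → ℝ := fun j v =>
      what j (Function.update (cl v) j 0) with hwfundef
    have hAs0 : ∀ j v, (0:ℝ) ∈ As j v := by
      intro j v
      refine ⟨⟨le_rfl, zero_le_one⟩, ?_⟩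
      rw [mul_zero]
      exact wfbh_tstar_nonneg hq ht _
    have hAsbdd : ∀ j v, BddAbove (As j v) := fun j v => ⟨1, fun x hx => hx.1.2⟩
    have hsfun_nonneg : ∀ j v, 0 ≤ sfun j v := fun j v => le_csSup (hAsbdd j v) (hAs0 j v)
    have hsfun_le_one : ∀ j v, sfun j v ≤ 1 :=
      fun j v => csSup_le ⟨0, hAs0 j v⟩ (fun x hx => hx.1.2)
    have hAs_anti : ∀ j (a b : Fin (n+1) → ℝ), (∀ i, i ≠ j → a i ≤ b i) →
        As j b ⊆ As j a := by
      intro j a b hab x hx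
      refine ⟨hx.1, ?_⟩
      have h0' : ∀ i, 0 ≤ Function.update (cl a) j x i := by
        intro i
        rcases eq_or_ne i j with rfl | hij
        · rw [Function.update_self]
          exact hx.1.1
        · rw [Function.update_of_ne hij]
          exact hcl0 a i
      have hle' : Function.update (cl a) j x ≤ Function.update (cl b) j x := by
        intro i
        rcases eq_or_ne i j with rfl | hij
        · simp
        · rw [Function.update_of_ne hij, Function.update_of_ne hij]
          exact max_le_max (hab i hij) le_rfl
      have hev := (wfbh_key hq hw_pos hw_mono hF_mono ht _ _ h0' hle').1 j
      rw [Function.update_self] at hev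
      rw [Function.update_self] at hev
      exact hev hx.2
    have hsfun_anti : ∀ j (a b : Fin (n+1) → ℝ), (∀ i, i ≠ j → a i ≤ b i) →
        sfun j b ≤ sfun j a :=
      fun j a b hab => csSup_le_csSup (hAsbdd j a) ⟨0, hAs0 j b⟩ (hAs_anti j a b hab)
    have hwfun_mono : ∀ j (a b : Fin (n+1) → ℝ), (∀ i, i ≠ j → a i ≤ b i) →
        wfun j a ≤ wfun j b := by
      intro j a b hab
      refine hw_mono j ?_
      intro i
      rcases eq_or_ne i j with rfl | hij
      · simp
      · rw [Function.update_of_ne hij, Function.update_of_ne hij]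
        exact max_le_max (hab i hij) le_rfl
    have hwfun_pos : ∀ j v, 0 < wfun j v := fun j v => hw_pos _ _
    -- countable dense coordinate sets containing all atoms
    set Dset : Fin (n+1) → Set ℝ := fun i =>
      Set.range ((↑·) : ℚ → ℝ) ∪ {a : ℝ | ν i {a} ≠ 0} with hDdef
    have hDc : ∀ i, (Dset i).Countable := fun i => wfbh_atoms_countable (ν i)
    have hDne : ∀ i, (0:ℝ) ∈ Dset i := fun i => Or.inl ⟨0, by norm_num⟩
    have hfex := fun i => (hDc i).exists_eq_range ⟨0, hDne i⟩
    choose f hf using hfex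
    set ee : (Fin (n+1) → ℕ) → (Fin (n+1) → ℝ) := fun g i => f i (g i) with heedef
    have hee : ∀ g i, ee g i ∈ Dset i := by
      intro g i
      rw [hf i]
      exact ⟨g i, rfl⟩
    have heesurj : ∀ d : Fin (n+1) → ℝ, (∀ i, d i ∈ Dset i) → ∃ g, ∀ i, ee g i = d i := by
      intro d hd
      have hex : ∀ i, ∃ k, f i k = d i := by
        intro i
        have hdi := hd i
        rw [hf i] at hdi
        obtain ⟨k, hk⟩ := hdi
        exact ⟨k, hk⟩
      choose g hg using hex
      exact ⟨g, hg⟩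
    -- the four Borel envelopes
    set supS : Fin (n+1) → (Fin (n+1) → ℝ) → ℝ≥0∞ := fun j v =>
      ⨅ g : Fin (n+1) → ℕ, (if ∀ i, i ≠ j → ee g i ≤ v i then
        ENNReal.ofReal (sfun j (ee g)) else ⊤) with hsupSdef
    set loS : Fin (n+1) → (Fin (n+1) → ℝ) → ℝ≥0∞ := fun j v =>
      ⨆ g : Fin (n+1) → ℕ, (if ∀ i, i ≠ j → v i ≤ ee g i then
        ENNReal.ofReal (sfun j (ee g)) else 0) with hloSdef
    set loW : Fin (n+1) → (Fin (n+1) → ℝ) → ℝ≥0∞ := fun j v =>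
      ⨆ g : Fin (n+1) → ℕ, (if ∀ i, i ≠ j → ee g i ≤ v i then
        ENNReal.ofReal (wfun j (ee g)) else 0) with hloWdef
    set upW : Fin (n+1) → (Fin (n+1) → ℝ) → ℝ≥0∞ := fun j v =>
      ⨅ g : Fin (n+1) → ℕ, (if ∀ i, i ≠ j → v i ≤ ee g i then
        ENNReal.ofReal (wfun j (ee g)) else ⊤) with hupWdef
    have hcondm_le : ∀ (j : Fin (n+1)) (g : Fin (n+1) → ℕ),
        MeasurableSet {v : Fin (n+1) → ℝ | ∀ i, i ≠ j → ee g i ≤ v i} := by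
      intro j g
      have heq : {v : Fin (n+1) → ℝ | ∀ i, i ≠ j → ee g i ≤ v i} =
          ⋂ i, {v : Fin (n+1) → ℝ | i ≠ j → ee g i ≤ v i} := by
        ext v; simp
      rw [heq]
      refine MeasurableSet.iInter fun i => ?_
      by_cases hij : i = j
      · have : {v : Fin (n+1) → ℝ | i ≠ j → ee g i ≤ v i} = Set.univ := by
          ext v; simp [hij]
        rw [this]; exact MeasurableSet.univ
      · have : {v : Fin (n+1) → ℝ | i ≠ j → ee g i ≤ v i} =
            {v : Fin (n+1) → ℝ | ee g i ≤ v i} := by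
          ext v; simp [hij]
        rw [this]
        exact measurableSet_le measurable_const (measurable_pi_apply i)
    have hcondm_ge : ∀ (j : Fin (n+1)) (g : Fin (n+1) → ℕ),
        MeasurableSet {v : Fin (n+1) → ℝ | ∀ i, i ≠ j → v i ≤ ee g i} := by
      intro j g
      have heq : {v : Fin (n+1) → ℝ | ∀ i, i ≠ j → v i ≤ ee g i} =
          ⋂ i, {v : Fin (n+1) → ℝ | i ≠ j → v i ≤ ee g i} := by
        ext v; simp
      rw [heq]
      refine MeasurableSet.iInter fun i => ?_
      by_cases hij : i = j
      · have : {v : Fin (n+1) → ℝ | i ≠ j → v i ≤ ee g i} = Set.univ := by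
          ext v; simp [hij]
        rw [this]; exact MeasurableSet.univ
      · have : {v : Fin (n+1) → ℝ | i ≠ j → v i ≤ ee g i} =
            {v : Fin (n+1) → ℝ | v i ≤ ee g i} := by
          ext v; simp [hij]
        rw [this]
        exact measurableSet_le (measurable_pi_apply i) measurable_const
    have hsupSm : ∀ j, Measurable (supS j) :=
      fun j => Measurable.iInf fun g =>
        Measurable.ite (hcondm_le j g) measurable_const measurable_const
    have hloSm : ∀ j, Measurable (loS j) :=
      fun j => Measurable.iSup fun g =>
        Measurable.ite (hcondm_ge j g) measurable_const measurable_const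
    have hloWm : ∀ j, Measurable (loW j) :=
      fun j => Measurable.iSup fun g =>
        Measurable.ite (hcondm_le j g) measurable_const measurable_const
    have hupWm : ∀ j, Measurable (upW j) :=
      fun j => Measurable.iInf fun g =>
        Measurable.ite (hcondm_ge j g) measurable_const measurable_const
    -- sandwich inequalities
    have hsupS_ge : ∀ j v, ENNReal.ofReal (sfun j v) ≤ supS j v := by
      intro j v
      refine le_iInf fun g => ?_
      split_ifs with h
      · exact ENNReal.ofReal_le_ofReal (hsfun_anti j (ee g) v h)
      · exact le_top
    have hloS_le : ∀ j v, loS j v ≤ ENNReal.ofReal (sfun j v) := by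
      intro j v
      refine iSup_le fun g => ?_
      split_ifs with h
      · exact ENNReal.ofReal_le_ofReal (hsfun_anti j v (ee g) h)
      · exact zero_le
    have hloW_le : ∀ j v, loW j v ≤ ENNReal.ofReal (wfun j v) := by
      intro j v
      refine iSup_le fun g => ?_
      split_ifs with h
      · exact ENNReal.ofReal_le_ofReal (hwfun_mono j (ee g) v h)
      · exact zero_le
    have hupW_ge : ∀ j v, ENNReal.ofReal (wfun j v) ≤ upW j v := by
      intro j v
      refine le_iInf fun g => ?_
      split_ifs with h
      · exact ENNReal.ofReal_le_ofReal (hwfun_mono j v (ee g) h)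
      · exact le_top
    -- stacking & null bad sets
    have hbetween : ∀ (j : Fin (n+1)) (x y : Fin (n+1) → ℝ),
        (∀ i, i ≠ j → x i < y i ∨ (x i = y i ∧
          (x i ∈ Set.range ((↑·) : ℚ → ℝ) ∨ ν i {x i} ≠ 0))) →
        ∃ g, (∀ i, i ≠ j → x i ≤ ee g i) ∧ (∀ i, i ≠ j → ee g i ≤ y i) := by
      intro j x y hxy
      have hex : ∀ i, ∃ c, c ∈ Dset i ∧ (i ≠ j → x i ≤ c ∧ c ≤ y i) := by
        intro i
        by_cases hij : i = j
        · exact ⟨0, hDne i, fun h => absurd hij h⟩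
        · rcases hxy i hij with h | ⟨h1, h2⟩
          · obtain ⟨r, hr1, hr2⟩ := exists_rat_btwn h
            exact ⟨r, Or.inl ⟨r, rfl⟩, fun _ => ⟨hr1.le, hr2.le⟩⟩
          · exact ⟨x i, h2, fun _ => ⟨le_rfl, h1.le⟩⟩
      choose d hd using hex
      obtain ⟨g, hg⟩ := heesurj d (fun i => (hd i).1)
      refine ⟨g, ?_, ?_⟩
      · intro i hij
        rw [hg i]
        exact ((hd i).2 hij).1
      · intro i hij
        rw [hg i]
        exact ((hd i).2 hij).2
    have hbadS : ∀ j, νpi {v | loS j v ≠ supS j v} = 0 := by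
      intro j
      refine wfbh_envelope_badset_null (n+1) ν hνprob j (loS j) (supS j) (hloSm j) (hsupSm j)
        (fun v => le_trans (hloS_le j v) (hsupS_ge j v)) ?_
      intro x y hxy
      obtain ⟨g, hg1, hg2⟩ := hbetween j x y hxy
      refine Or.inr ?_
      calc supS j y ≤ ENNReal.ofReal (sfun j (ee g)) := iInf_le_of_le g (le_of_eq (if_pos hg2))
        _ ≤ loS j x := le_iSup_of_le g (le_of_eq (if_pos hg1).symm)
    have hbadW : ∀ j, νpi {v | loW j v ≠ upW j v} = 0 := by
      intro j
      refine wfbh_envelope_badset_null (n+1) ν hνprob j (loW j) (upW j) (hloWm j) (hupWm j)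
        (fun v => le_trans (hloW_le j v) (hupW_ge j v)) ?_
      intro x y hxy
      obtain ⟨g, hg1, hg2⟩ := hbetween j x y hxy
      refine Or.inl ?_
      calc upW j x ≤ ENNReal.ofReal (wfun j (ee g)) := iInf_le_of_le g (le_of_eq (if_pos hg1))
        _ ≤ loW j y := le_iSup_of_le g (le_of_eq (if_pos hg2).symm)
    -- the dominating Borel function
    set NN : ℝ≥0∞ := ((n+1 : ℕ) : ℝ≥0∞) with hNNdef
    have hNN0 : NN ≠ 0 := by
      simp [hNNdef]
    have hNNtop : NN ≠ ⊤ := by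
      simp [hNNdef]
    set GJ : Fin (n+1) → (Fin (n+1) → ℝ) → ℝ≥0∞ := fun j v =>
      if ENNReal.ofReal (v j) ≤ supS j v then
        ENNReal.ofReal q * (NN * loW j v * loS j v)⁻¹ else 0 with hGJdef
    have hGJm : ∀ j, Measurable (GJ j) := by
      intro j
      refine Measurable.ite ?_ ?_ measurable_const
      · exact measurableSet_le ((ENNReal.measurable_ofReal).comp (measurable_pi_apply j))
          (hsupSm j)
      · exact (((measurable_const.mul (hloWm j)).mul (hloSm j)).inv).const_mul _
    have hmR : (0:ℝ) < ((n+1 : ℕ) : ℝ) := by positivity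
    have hptwise : ∀ᵐ ω ∂μ, ENNReal.ofReal (fdp ω) ≤ ∑ j ∈ H0, GJ j (P ω) := by
      have hae : ∀ᵐ ω ∂μ, ∀ j, j ∈ H0 → 0 < p j ω := by
        rw [ae_all_iff]
        intro j
        by_cases hj : j ∈ H0
        · have h2 := hnull j hj 0 ⟨le_rfl, zero_le_one⟩
          rw [ENNReal.ofReal_zero] at h2
          have h3 : μ {ω | p j ω ≤ 0} = 0 := le_antisymm h2 (zero_le)
          have h4 : ∀ᵐ ω ∂μ, 0 < p j ω := by
            rw [ae_iff]
            convert h3 using 2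
            ext ω
            simp [not_lt]
          exact h4.mono fun ω h _ => h
        · exact Filter.Eventually.of_forall fun ω h => absurd h hj
      filter_upwards [hae] with ω hvpos
      set v : Fin (n+1) → ℝ := P ω with hvdef
      have hv0 : ∀ i, 0 ≤ v i := fun i => (hrange i ω).1
      have hv1 : ∀ i, v i ≤ 1 := fun i => (hrange i ω).2
      have hclv : cl v = v := by rw [hvdef]; exact hclP ω
      set mR : ℝ := ((n+1 : ℕ) : ℝ) with hmRdef
      set gr : Fin (n+1) → ℝ := fun j =>
        if (0 < v j ∧ v j ≤ sfun j v) then q / (mR * wfun j v * sfun j v) else 0 with hgrdef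
      have hgr_nonneg : ∀ j, 0 ≤ gr j := by
        intro j
        simp only [hgrdef]
        split_ifs with h
        · have hs : 0 < sfun j v := lt_of_lt_of_le h.1 h.2
          have hw := hwfun_pos j v
          positivity
        · exact le_rfl
      have hfd : fdp ω = ((Ustar v ∩ H0).card : ℝ) / max ((Ustar v).card : ℝ) 1 := rfl
      have hreal : fdp ω ≤ ∑ j ∈ H0, gr j := by
        by_cases hUe : (Ustar v ∩ H0) = ∅
        · rw [hfd, hUe]
          simp only [Finset.card_empty, Nat.cast_zero, zero_div]
          exact Finset.sum_nonneg fun j _ => hgr_nonneg j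
        · have hUne : (Ustar v).Nonempty := by
            obtain ⟨j, hj⟩ := Finset.nonempty_iff_ne_empty.2 hUe
            exact ⟨j, (Finset.mem_inter.1 hj).1⟩
          have hk1 : (1:ℝ) ≤ ((Ustar v).card : ℝ) := by
            exact_mod_cast Finset.card_pos.2 hUne
          have hkpos : (0:ℝ) < ((Ustar v).card : ℝ) := lt_of_lt_of_le one_pos hk1
          have hmax : max (((Ustar v).card : ℝ)) 1 = ((Ustar v).card : ℝ) := max_eq_left hk1
          have hcardn : (Ustar v ∩ H0).card = ∑ j ∈ H0, (if j ∈ Ustar v then 1 else 0) := by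
            rw [Finset.inter_comm, ← Finset.filter_mem_eq_inter, Finset.card_filter]
          rw [hfd, hmax]
          have hstep : ((Ustar v ∩ H0).card : ℝ) / ((Ustar v).card : ℝ) =
              ∑ j ∈ H0, (if j ∈ Ustar v then (1:ℝ) else 0) / ((Ustar v).card : ℝ) := by
            rw [← Finset.sum_div]
            congr 1
            rw [hcardn]
            push_cast
            rfl
          rw [hstep]
          refine Finset.sum_le_sum ?_
          intro j hj
          by_cases hjU : j ∈ Ustar v
          swap
          · rw [if_neg hjU, zero_div]
            exact hgr_nonneg j
          rw [if_pos hjU]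
          have hvj : 0 < v j := hvpos j hj
          have hevj : what j v * v j ≤ tstar v := by
            have hjR := hF_sub (univ.filter fun i => what i v * v i ≤ tstar v) v
              (by rw [← hU v]; exact hjU)
            rw [Finset.mem_filter] at hjR
            exact hjR.2
          have hmemAs : v j ∈ As j v := by
            refine ⟨⟨hv0 j, hv1 j⟩, ?_⟩
            rw [hclv, Function.update_eq_self]
            exact hevj
          have hsle : v j ≤ sfun j v := le_csSup (hAsbdd j v) hmemAs
          simp only [hgrdef]
          rw [if_pos ⟨hvj, hsle⟩]
          have hw := hwfun_pos j v
          have hspos : 0 < sfun j v := lt_of_lt_of_le hvj hsle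
          rw [div_le_div_iff₀ hkpos (by positivity), one_mul]
          -- key bound over all of As
          have hkey : ∀ x ∈ As j v, mR * wfun j v * x ≤ q * ((Ustar v).card : ℝ) := by
            intro x hx
            obtain ⟨⟨hx0, hx1⟩, hevx⟩ := hx
            have hwx : wfun j v * x ≤ what j (Function.update (cl v) j x) * x := by
              refine mul_le_mul_of_nonneg_right ?_ hx0
              refine hw_mono j ?_
              intro i
              rcases eq_or_ne i j with rfl | hij
              · rw [Function.update_self, Function.update_self]
                exact hx0
              · rw [Function.update_of_ne hij, Function.update_of_ne hij]
            rcases le_total x (v j) with hxv | hxv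
            · -- low case
              have h1 : what j (Function.update (cl v) j x) * x ≤ what j v * v j := by
                refine mul_le_mul ?_ hxv hx0 (hw_pos j v).le
                refine hw_mono j ?_
                intro i
                rcases eq_or_ne i j with rfl | hij
                · rw [Function.update_self]
                  exact hxv
                · rw [Function.update_of_ne hij, hclv]
              have h2 := (ht v).1.2
              rw [← hU v] at h2
              calc mR * wfun j v * x = mR * (wfun j v * x) := by ring
                _ ≤ mR * tstar v := by
                    refine mul_le_mul_of_nonneg_left ?_ hmR.le
                    exact le_trans hwx (le_trans h1 hevj)
                _ ≤ q * ((Ustar v).card : ℝ) := h2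
            · -- high case
              have hle' : v ≤ Function.update (cl v) j x := by
                intro i
                rcases eq_or_ne i j with rfl | hij
                · rw [Function.update_self]
                  exact hxv
                · rw [Function.update_of_ne hij, hclv]
              have hkey2 := wfbh_key hq hw_pos hw_mono hF_mono ht
                (Function.update (cl v) j x) v hv0 hle'
              have hcc := hkey2.2
              have h2 := (ht (Function.update (cl v) j x)).1.2
              calc mR * wfun j v * x = mR * (wfun j v * x) := by ring
                _ ≤ mR * (what j (Function.update (cl v) j x) * x) :=
                    mul_le_mul_of_nonneg_left hwx hmR.le
                _ ≤ mR * tstar (Function.update (cl v) j x) := by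
                    refine mul_le_mul_of_nonneg_left ?_ hmR.le
                    have := hevx
                    rwa [] at this
                _ ≤ q * ((F (univ.filter fun i =>
                      what i (Function.update (cl v) j x) * (Function.update (cl v) j x) i ≤
                      tstar (Function.update (cl v) j x)) (Function.update (cl v) j x)).card : ℝ) :=
                    h2
                _ ≤ q * ((Ustar v).card : ℝ) := by
                    rw [hU v]
                    exact mul_le_mul_of_nonneg_left (by exact_mod_cast hcc) hq.le
          have hb : sfun j v ≤ q * ((Ustar v).card : ℝ) / (mR * wfun j v) := by
            refine csSup_le ⟨0, hAs0 j v⟩ ?_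
            intro x hx
            rw [le_div_iff₀ (by positivity)]
            calc x * (mR * wfun j v) = mR * wfun j v * x := by ring
              _ ≤ _ := hkey x hx
          calc mR * wfun j v * sfun j v
              ≤ mR * wfun j v * (q * ((Ustar v).card : ℝ) / (mR * wfun j v)) :=
                mul_le_mul_of_nonneg_left hb (by positivity)
            _ = q * ((Ustar v).card : ℝ) := by
                field_simp
      have hgrGJ : ∀ j, ENNReal.ofReal (gr j) ≤ GJ j v := by
        intro j
        simp only [hgrdef]
        split_ifs with h
        · have hvj := h.1
          have hsle := h.2
          have hspos : 0 < sfun j v := lt_of_lt_of_le hvj hsle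
          have hw := hwfun_pos j v
          have hcond : ENNReal.ofReal (v j) ≤ supS j v :=
            le_trans (ENNReal.ofReal_le_ofReal hsle) (hsupS_ge j v)
          simp only [hGJdef]
          rw [if_pos hcond]
          rw [ENNReal.ofReal_div_of_pos (by positivity), div_eq_mul_inv]
          refine mul_le_mul_right ?_ _
          refine ENNReal.inv_le_inv.2 ?_
          calc NN * loW j v * loS j v
              ≤ NN * ENNReal.ofReal (wfun j v) * ENNReal.ofReal (sfun j v) :=
                mul_le_mul' (mul_le_mul' le_rfl (hloW_le j v)) (hloS_le j v)
            _ = ENNReal.ofReal (mR * wfun j v * sfun j v) := by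
                rw [ENNReal.ofReal_mul (by positivity), ENNReal.ofReal_mul hmR.le]
                congr 2
                rw [hNNdef, hmRdef]
                exact (ENNReal.ofReal_natCast _).symm
        · rw [ENNReal.ofReal_zero]
          exact zero_le
      calc ENNReal.ofReal (fdp ω) ≤ ENNReal.ofReal (∑ j ∈ H0, gr j) :=
            ENNReal.ofReal_le_ofReal hreal
        _ = ∑ j ∈ H0, ENNReal.ofReal (gr j) :=
            ENNReal.ofReal_sum_of_nonneg (fun j _ => hgr_nonneg j)
        _ ≤ ∑ j ∈ H0, GJ j v := Finset.sum_le_sum fun j _ => hgrGJ j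
    have hperj : ∀ j ∈ H0, ∫⁻ v, GJ j v ∂νpi ≤
        ENNReal.ofReal q * NN⁻¹ * ∫⁻ ω, ENNReal.ofReal ((wfun j (P ω))⁻¹) ∂μ := by
      intro j hj
      set E : (Fin (n+1) → ℝ) ≃ᵐ ℝ × (Fin n → ℝ) :=
        MeasurableEquiv.piFinSuccAbove (fun _ : Fin (n+1) => ℝ) j with hEdef
      have mp := measurePreserving_piFinSuccAbove ν j
      set νr : Measure (Fin n → ℝ) := Measure.pi (fun k => ν (Fin.succAbove j k)) with hνrdef
      haveI hr1 : ∀ k : Fin n, IsProbabilityMeasure (ν (Fin.succAbove j k)) := fun k => hνprob _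
      haveI hr2 : IsProbabilityMeasure νr := by
        rw [hνrdef]
        infer_instance
      have hEsymm : ∀ (x : ℝ) (y : Fin n → ℝ), E.symm (x, y) = Fin.insertNth j x y :=
        fun x y => rfl
      have mpsymm := mp.symm E
      have hinvco : ∀ (x : ℝ) (y : Fin n → ℝ) (i : Fin (n+1)), i ≠ j →
          (Fin.insertNth j x y : Fin (n+1) → ℝ) i =
          (Fin.insertNth j (0:ℝ) y : Fin (n+1) → ℝ) i := by
        intro x y i hij
        obtain ⟨k, hk⟩ := Fin.exists_succAbove_eq hij
        rw [← hk, Fin.insertNth_apply_succAbove, Fin.insertNth_apply_succAbove]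
      have hsupSinv : ∀ x y, supS j (Fin.insertNth j x y) = supS j (Fin.insertNth j (0:ℝ) y) := by
        intro x y
        simp only [hsupSdef]
        refine iInf_congr fun g => ?_
        refine if_congr ?_ rfl rfl
        constructor
        · intro h i hij
          rw [← hinvco x y i hij]
          exact h i hij
        · intro h i hij
          rw [hinvco x y i hij]
          exact h i hij
      have hloSinv : ∀ x y, loS j (Fin.insertNth j x y) = loS j (Fin.insertNth j (0:ℝ) y) := by
        intro x y
        simp only [hloSdef]
        refine iSup_congr fun g => ?_
        refine if_congr ?_ rfl rfl
        constructor
        · intro h i hij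
          rw [← hinvco x y i hij]
          exact h i hij
        · intro h i hij
          rw [hinvco x y i hij]
          exact h i hij
      have hloWinv : ∀ x y, loW j (Fin.insertNth j x y) = loW j (Fin.insertNth j (0:ℝ) y) := by
        intro x y
        simp only [hloWdef]
        refine iSup_congr fun g => ?_
        refine if_congr ?_ rfl rfl
        constructor
        · intro h i hij
          rw [← hinvco x y i hij]
          exact h i hij
        · intro h i hij
          rw [hinvco x y i hij]
          exact h i hij
      have hupWinv : ∀ x y, upW j (Fin.insertNth j x y) = upW j (Fin.insertNth j (0:ℝ) y) := by
        intro x y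
        simp only [hupWdef]
        refine iInf_congr fun g => ?_
        refine if_congr ?_ rfl rfl
        constructor
        · intro h i hij
          rw [← hinvco x y i hij]
          exact h i hij
        · intro h i hij
          rw [hinvco x y i hij]
          exact h i hij
      have hcoordj : ∀ (x : ℝ) (y : Fin n → ℝ),
          (Fin.insertNth j x y : Fin (n+1) → ℝ) j = x :=
        fun x y => Fin.insertNth_apply_same (α := fun _ => ℝ) j x y
      have hstep1 : ∫⁻ v, GJ j v ∂νpi = ∫⁻ z, GJ j (E.symm z) ∂((ν j).prod νr) :=
        (mpsymm.lintegral_comp (hGJm j)).symm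
      rw [hstep1, lintegral_prod_symm' (fun z => GJ j (E.symm z)) ((hGJm j).comp E.symm.measurable)]
      -- inner integral bound
      have hinner : ∀ y : Fin n → ℝ,
          (∫⁻ x, GJ j (E.symm (x, y)) ∂(ν j)) ≤
          supS j (Fin.insertNth j (0:ℝ) y) * (ENNReal.ofReal q *
            (NN * loW j (Fin.insertNth j (0:ℝ) y) * loS j (Fin.insertNth j (0:ℝ) y))⁻¹) := by
        intro y
        set sy := supS j (Fin.insertNth j (0:ℝ) y) with hsydef
        set cc := ENNReal.ofReal q *
          (NN * loW j (Fin.insertNth j (0:ℝ) y) * loS j (Fin.insertNth j (0:ℝ) y))⁻¹ with hccdef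
        have hGJeq : ∀ x, GJ j (E.symm (x, y)) = if ENNReal.ofReal x ≤ sy then cc else 0 := by
          intro x
          rw [hEsymm]
          simp only [hGJdef]
          rw [hsupSinv x y, hloWinv x y, hloSinv x y, hcoordj]
        have hsy1 : sy ≤ ENNReal.ofReal 1 := by
          have hex : ∀ i : Fin (n+1), ∃ c, c ∈ Dset i ∧
              c ≤ (Fin.insertNth j (0:ℝ) y : Fin (n+1) → ℝ) i := by
            intro i
            obtain ⟨r, hr⟩ := exists_rat_lt ((Fin.insertNth j (0:ℝ) y : Fin (n+1) → ℝ) i)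
            exact ⟨r, Or.inl ⟨r, rfl⟩, hr.le⟩
          choose d hd using hex
          obtain ⟨g, hg⟩ := heesurj d (fun i => (hd i).1)
          have hgle : ∀ i, i ≠ j → ee g i ≤ (Fin.insertNth j (0:ℝ) y : Fin (n+1) → ℝ) i := by
            intro i _
            rw [hg i]
            exact (hd i).2
          rw [hsydef]
          simp only [hsupSdef]
          refine iInf_le_of_le g ?_
          rw [if_pos hgle]
          exact ENNReal.ofReal_le_ofReal (hsfun_le_one j (ee g))
        have hsytop : sy ≠ ⊤ := ne_top_of_le_ne_top ENNReal.ofReal_ne_top hsy1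
        set c' : ℝ := sy.toReal with hc'def
        have hc'0 : (0:ℝ) ≤ c' := ENNReal.toReal_nonneg
        have hc'1 : c' ≤ 1 := by
          calc c' ≤ (ENNReal.ofReal 1).toReal :=
              ENNReal.toReal_mono ENNReal.ofReal_ne_top hsy1
            _ = 1 := by simp
        have hsyeq : sy = ENNReal.ofReal c' := (ENNReal.ofReal_toReal hsytop).symm
        have hseteq : {x : ℝ | ENNReal.ofReal x ≤ sy} = Set.Iic c' := by
          ext x
          simp only [Set.mem_setOf_eq, Set.mem_Iic]
          constructor
          · intro h
            rcases le_or_gt x 0 with h0 | h0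
            · exact le_trans h0 hc'0
            · rw [hsyeq, ENNReal.ofReal_le_ofReal_iff hc'0] at h
              exact h
          · intro h
            rw [hsyeq]
            exact ENNReal.ofReal_le_ofReal h
        have hcalc : (∫⁻ x, GJ j (E.symm (x, y)) ∂(ν j)) =
            cc * ν j {x : ℝ | ENNReal.ofReal x ≤ sy} := by
          have heq2 : ∀ x, GJ j (E.symm (x, y)) =
              Set.indicator {x : ℝ | ENNReal.ofReal x ≤ sy} (fun _ => cc) x := by
            intro x
            rw [hGJeq x, Set.indicator_apply]
            rfl
          simp_rw [heq2]
          exact lintegral_indicator_const (by rw [hseteq]; exact measurableSet_Iic) cc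
        rw [hcalc]
        have hbound : ν j {x : ℝ | ENNReal.ofReal x ≤ sy} ≤ sy := by
          rw [hseteq, hsyeq]
          have : ν j (Set.Iic c') = μ {ω | p j ω ≤ c'} := by
            rw [hνdef]
            simp only []
            rw [Measure.map_apply (hmeas j) measurableSet_Iic]
            rfl
          rw [this]
          exact hnull j hj c' ⟨hc'0, hc'1⟩
        calc cc * ν j {x : ℝ | ENNReal.ofReal x ≤ sy} ≤ cc * sy := mul_le_mul_right hbound _
          _ = sy * cc := mul_comm _ _
      -- a.e. replacement of supS by loS and the algebra
      have hmeasne : MeasurableSet {v : Fin (n+1) → ℝ | loS j v ≠ supS j v} := by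
        have : {v : Fin (n+1) → ℝ | loS j v ≠ supS j v} =
            {v : Fin (n+1) → ℝ | loS j v = supS j v}ᶜ := by
          ext v
          simp
        have h2 : {v : Fin (n+1) → ℝ | loS j v = supS j v} =
            {v | loS j v ≤ supS j v} ∩ {v | supS j v ≤ loS j v} := by
          ext v
          simp [le_antisymm_iff]
        rw [this, h2]
        exact ((measurableSet_le (hloSm j) (hsupSm j)).inter
          (measurableSet_le (hsupSm j) (hloSm j))).compl
      have hbadY : νr {y | loS j (Fin.insertNth j (0:ℝ) y) ≠ supS j (Fin.insertNth j (0:ℝ) y)} = 0 := by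
        have h1 : ((ν j).prod νr) (E.symm ⁻¹' {v | loS j v ≠ supS j v}) = 0 := by
          rw [mpsymm.measure_preimage hmeasne.nullMeasurableSet]
          exact hbadS j
        have h2 : E.symm ⁻¹' {v | loS j v ≠ supS j v} =
            (Set.univ : Set ℝ) ×ˢ {y | loS j (Fin.insertNth j (0:ℝ) y) ≠ supS j (Fin.insertNth j (0:ℝ) y)} := by
          ext ⟨x, y⟩
          simp only [Set.mem_preimage, Set.mem_setOf_eq, Set.mem_prod, Set.mem_univ, true_and]
          rw [hEsymm, hloSinv x y, hsupSinv x y]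
        rw [h2, Measure.prod_prod, measure_univ, one_mul] at h1
        exact h1
      have haeY : ∀ᵐ y ∂νr, loS j (Fin.insertNth j (0:ℝ) y) = supS j (Fin.insertNth j (0:ℝ) y) := by
        rw [ae_iff]
        exact hbadY
      have hloWm' : Measurable fun y : Fin n → ℝ => loW j (Fin.insertNth j (0:ℝ) y) := by
        have : (fun y : Fin n → ℝ => loW j (Fin.insertNth j (0:ℝ) y)) =
            (loW j) ∘ (fun y => E.symm ((0:ℝ), y)) := by
          funext y
          simp [hEsymm]
        rw [this]
        exact (hloWm j).comp (E.symm.measurable.comp measurable_prodMk_left)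
      calc ∫⁻ y, ∫⁻ x, GJ j (E.symm (x, y)) ∂(ν j) ∂νr
          ≤ ∫⁻ y, supS j (Fin.insertNth j (0:ℝ) y) * (ENNReal.ofReal q *
              (NN * loW j (Fin.insertNth j (0:ℝ) y) * loS j (Fin.insertNth j (0:ℝ) y))⁻¹) ∂νr :=
            lintegral_mono hinner
        _ ≤ ∫⁻ y, ENNReal.ofReal q * NN⁻¹ * (loW j (Fin.insertNth j (0:ℝ) y))⁻¹ ∂νr := by
            refine lintegral_mono_ae ?_
            filter_upwards [haeY] with y hy
            rw [← hy]
            set S := loS j (Fin.insertNth j (0:ℝ) y)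
            set W := loW j (Fin.insertNth j (0:ℝ) y)
            calc S * (ENNReal.ofReal q * (NN * W * S)⁻¹)
                = ENNReal.ofReal q * (S * ((NN * W) * S)⁻¹) := by ring
              _ ≤ ENNReal.ofReal q * (NN * W)⁻¹ :=
                  mul_le_mul_right (wfbh_ennreal_cancel (NN * W) S) _
              _ = ENNReal.ofReal q * NN⁻¹ * W⁻¹ := by
                  rw [ENNReal.mul_inv (Or.inl hNN0) (Or.inl hNNtop), mul_assoc]
        _ = ENNReal.ofReal q * NN⁻¹ * ∫⁻ y, (loW j (Fin.insertNth j (0:ℝ) y))⁻¹ ∂νr :=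
            lintegral_const_mul _ hloWm'.inv
        _ = ENNReal.ofReal q * NN⁻¹ * ∫⁻ ω, ENNReal.ofReal ((wfun j (P ω))⁻¹) ∂μ := by
            congr 1
            have hmeasW : MeasurableSet {v : Fin (n+1) → ℝ | loW j v ≠ upW j v} := by
              have : {v : Fin (n+1) → ℝ | loW j v ≠ upW j v} =
                  {v : Fin (n+1) → ℝ | loW j v = upW j v}ᶜ := by
                ext v
                simp
              have h2 : {v : Fin (n+1) → ℝ | loW j v = upW j v} =
                  {v | loW j v ≤ upW j v} ∩ {v | upW j v ≤ loW j v} := by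
                ext v
                simp [le_antisymm_iff]
              rw [this, h2]
              exact ((measurableSet_le (hloWm j) (hupWm j)).inter
                (measurableSet_le (hupWm j) (hloWm j))).compl
            have hpull : μ (P ⁻¹' {v : Fin (n+1) → ℝ | loW j v ≠ upW j v}) = 0 := by
              have hma := Measure.map_apply (μ := μ) hPmeas hmeasW
              rw [hlaw] at hma
              rw [← hma]
              exact hbadW j
            have hgood : ∀ᵐ ω ∂μ, loW j (P ω) = upW j (P ω) := by
              rw [ae_iff]
              exact hpull
            have e1 : ∫⁻ ω, ENNReal.ofReal ((wfun j (P ω))⁻¹) ∂μ =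
                ∫⁻ ω, (loW j (P ω))⁻¹ ∂μ := by
              refine lintegral_congr_ae ?_
              filter_upwards [hgood] with ω hg
              have hsand : loW j (P ω) = ENNReal.ofReal (wfun j (P ω)) :=
                le_antisymm (hloW_le j (P ω)) (by rw [hg]; exact hupW_ge j (P ω))
              rw [hsand, ← ENNReal.ofReal_inv_of_pos (hwfun_pos j (P ω))]
            have e2 : ∫⁻ ω, (loW j (P ω))⁻¹ ∂μ = ∫⁻ v, (loW j v)⁻¹ ∂νpi := by
              rw [← hlaw, lintegral_map (f := fun v => (loW j v)⁻¹) (hloWm j).inv hPmeas]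
            have e3 : ∫⁻ v, (loW j v)⁻¹ ∂νpi =
                ∫⁻ z, (loW j (E.symm z))⁻¹ ∂((ν j).prod νr) :=
              (mpsymm.lintegral_comp (hloWm j).inv).symm
            have e4 : ∫⁻ z, (loW j (E.symm z))⁻¹ ∂((ν j).prod νr) =
                ∫⁻ y, (loW j (Fin.insertNth j (0:ℝ) y))⁻¹ ∂νr := by
              rw [lintegral_prod_symm' (fun z => (loW j (E.symm z))⁻¹) (((hloWm j).inv).comp E.symm.measurable)]
              refine lintegral_congr fun y => ?_
              have hcst : ∀ x : ℝ, (loW j (E.symm (x, y)))⁻¹ =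
                  (loW j (Fin.insertNth j (0:ℝ) y))⁻¹ := by
                intro x
                rw [hEsymm, hloWinv x y]
              simp_rw [hcst]
              rw [lintegral_const, measure_univ, mul_one]
            rw [e1, e2, e3, e4]
    have hres : ∑ j ∈ H0, ∫⁻ ω, ENNReal.ofReal ((wfun j (P ω))⁻¹) ∂μ ≤ NN := by
      have hwup : ∀ (j : Fin (n+1)) (ω : Ω),
          wfun j (P ω) = what j (Function.update (fun i => p i ω) j 0) := by
        intro j ω
        simp only [hwfundef]
        rw [hclP ω]
      set cj : Fin (n+1) → ℝ := fun j =>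
        what j (Function.update (fun _ : Fin (n+1) => (0:ℝ)) j 0) with hcjdef
      have hcjpos : ∀ j, 0 < cj j := fun j => hw_pos _ _
      have hwlb : ∀ (j : Fin (n+1)) (ω : Ω), cj j ≤ wfun j (P ω) := by
        intro j ω
        simp only [hcjdef, hwfundef]
        refine hw_mono j ?_
        intro i
        rcases eq_or_ne i j with rfl | hij
        · simp
        · rw [Function.update_of_ne hij, Function.update_of_ne hij]
          exact hcl0 _ i
      have hfin : ∀ j, (∫⁻ ω, ENNReal.ofReal ((wfun j (P ω))⁻¹) ∂μ) ≠ ⊤ := by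
        intro j
        refine ne_top_of_le_ne_top (ENNReal.ofReal_ne_top (r := (cj j)⁻¹)) ?_
        calc ∫⁻ ω, ENNReal.ofReal ((wfun j (P ω))⁻¹) ∂μ
            ≤ ∫⁻ _ω, ENNReal.ofReal ((cj j)⁻¹) ∂μ := by
              refine lintegral_mono fun ω => ?_
              refine ENNReal.ofReal_le_ofReal ?_
              exact inv_anti₀ (hcjpos j) (hwlb j ω)
          _ = ENNReal.ofReal ((cj j)⁻¹) := by
              rw [lintegral_const, measure_univ, mul_one]
      have hBoch : ∀ j ∈ H0, ∫ ω, (what j (Function.update (fun i => p i ω) j 0))⁻¹ ∂μ =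
          (∫⁻ ω, ENNReal.ofReal ((wfun j (P ω))⁻¹) ∂μ).toReal := by
        intro j hj
        have hmeasW : MeasurableSet {v : Fin (n+1) → ℝ | loW j v ≠ upW j v} := by
          have h1 : {v : Fin (n+1) → ℝ | loW j v ≠ upW j v} =
              {v : Fin (n+1) → ℝ | loW j v = upW j v}ᶜ := by
            ext v
            simp
          have h2 : {v : Fin (n+1) → ℝ | loW j v = upW j v} =
              {v | loW j v ≤ upW j v} ∩ {v | upW j v ≤ loW j v} := by
            ext v
            simp [le_antisymm_iff]
          rw [h1, h2]
          exact ((measurableSet_le (hloWm j) (hupWm j)).inter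
            (measurableSet_le (hupWm j) (hloWm j))).compl
        have hpull : μ (P ⁻¹' {v : Fin (n+1) → ℝ | loW j v ≠ upW j v}) = 0 := by
          have hma := Measure.map_apply (μ := μ) hPmeas hmeasW
          rw [hlaw] at hma
          rw [← hma]
          exact hbadW j
        have hgood : ∀ᵐ ω ∂μ, loW j (P ω) = upW j (P ω) := by
          rw [ae_iff]
          exact hpull
        have haeeq : (fun ω => (wfun j (P ω))⁻¹) =ᵐ[μ]
            (fun ω => ((loW j (P ω)).toReal)⁻¹) := by
          filter_upwards [hgood] with ω hg
          have hsand : loW j (P ω) = ENNReal.ofReal (wfun j (P ω)) :=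
            le_antisymm (hloW_le j (P ω)) (by rw [hg]; exact hupW_ge j (P ω))
          rw [hsand, ENNReal.toReal_ofReal (hwfun_pos j (P ω)).le]
        have hsm : AEStronglyMeasurable (fun ω => (wfun j (P ω))⁻¹) μ := by
          have hmr : Measurable fun ω => ((loW j (P ω)).toReal)⁻¹ :=
            (((hloWm j).comp hPmeas).ennreal_toReal).inv
          exact (hmr.aemeasurable.congr haeeq.symm).aestronglyMeasurable
        have hnn : 0 ≤ᵐ[μ] fun ω => (what j (Function.update (fun i => p i ω) j 0))⁻¹ :=
          Filter.Eventually.of_forall fun ω => inv_nonneg.2 (hw_pos _ _).le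
        have hsm' : AEStronglyMeasurable
            (fun ω => (what j (Function.update (fun i => p i ω) j 0))⁻¹) μ := by
          refine AEStronglyMeasurable.congr hsm ?_
          refine Filter.Eventually.of_forall fun ω => ?_
          show (wfun j (P ω))⁻¹ = (what j (Function.update (fun i => p i ω) j 0))⁻¹
          rw [hwup j ω]
        rw [integral_eq_lintegral_of_nonneg_ae hnn hsm']
        congr 1
        refine lintegral_congr fun ω => ?_
        rw [hwup j ω]
      have hsumfin : (∑ j ∈ H0, ∫⁻ ω, ENNReal.ofReal ((wfun j (P ω))⁻¹) ∂μ) ≠ ⊤ :=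
        (ENNReal.sum_lt_top.2 fun j _ => (hfin j).lt_top).ne
      have hsum : (∑ j ∈ H0, ∫⁻ ω, ENNReal.ofReal ((wfun j (P ω))⁻¹) ∂μ).toReal ≤
          ((n+1 : ℕ) : ℝ) := by
        rw [ENNReal.toReal_sum (fun j _ => hfin j)]
        calc ∑ j ∈ H0, (∫⁻ ω, ENNReal.ofReal ((wfun j (P ω))⁻¹) ∂μ).toReal
            = ∑ j ∈ H0, ∫ ω, (what j (Function.update (fun i => p i ω) j 0))⁻¹ ∂μ :=
              (Finset.sum_congr rfl fun j hj => hBoch j hj).symm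
          _ ≤ ((n+1:ℕ) : ℝ) := hw_cond
      rw [hNNdef, show ((n+1:ℕ) : ℝ≥0∞) = ENNReal.ofReal ((n+1:ℕ) : ℝ) from
        (ENNReal.ofReal_natCast _).symm]
      exact (ENNReal.le_ofReal_iff_toReal_le hsumfin (by positivity)).2 hsum
    -- combine
    calc ∫⁻ ω, ENNReal.ofReal (fdp ω) ∂μ
        ≤ ∫⁻ ω, ∑ j ∈ H0, GJ j (P ω) ∂μ := lintegral_mono_ae hptwise
      _ = ∑ j ∈ H0, ∫⁻ ω, GJ j (P ω) ∂μ :=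
          lintegral_finset_sum _ (fun j _ => (hGJm j).comp hPmeas)
      _ = ∑ j ∈ H0, ∫⁻ v, GJ j v ∂νpi := by
          refine Finset.sum_congr rfl fun j _ => ?_
          rw [← hlaw, lintegral_map (hGJm j) hPmeas]
      _ ≤ ∑ j ∈ H0, ENNReal.ofReal q * NN⁻¹ *
            ∫⁻ ω, ENNReal.ofReal ((wfun j (P ω))⁻¹) ∂μ := Finset.sum_le_sum hperj
      _ = ENNReal.ofReal q * NN⁻¹ *
            ∑ j ∈ H0, ∫⁻ ω, ENNReal.ofReal ((wfun j (P ω))⁻¹) ∂μ := by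
          rw [Finset.mul_sum]
      _ ≤ ENNReal.ofReal q * NN⁻¹ * NN := by
          exact mul_le_mul_right hres _
      _ = ENNReal.ofReal q := by
          rw [mul_assoc, ENNReal.inv_mul_cancel hNN0 hNNtop, mul_one]
  calc (∫⁻ ω, ENNReal.ofReal (fdp ω) ∂μ).toReal
      ≤ (ENNReal.ofReal q).toReal := ENNReal.toReal_mono ENNReal.ofReal_ne_top hmain
    _ = q := ENNReal.toReal_ofReal hq.le
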